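/- Let N be a group with center Z, let 𝔊 be a group, and let X : 𝔊 → Out(N) be an abstract kernel. Form the pullback G of Aut(N) → Out(N) along X. Then the sequence 0 → Z → N → G → 𝔊 → 1, where N → G is induced by the conjugation map N → Aut(N) together with the trivial map to 𝔊, is an exact sequence of groups, and N → G with the evident G-action on N is a crossed module (so the sequence is a crossed 2-fold extension of 𝔊 by Z). -/

import Mathlib

/-- The subgroup of inner automorphisms of a group `N`. -/
def Inn (N : Type*) [Group N] : Subgroup (MulAut N) :=
  (MulAut.conj : N →* MulAut N).range

instance Inn.normal (N : Type*) [Group N] : (Inn N).Normal := by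
  constructor
  rintro _ ⟨n, rfl⟩ φ
  refine ⟨φ n, ?_⟩
  ext m
  show MulAut.conj (φ n) m = (φ * MulAut.conj n * φ⁻¹) m
  simp only [MulAut.mul_apply, MulAut.conj_apply, map_mul, map_inv,
    MulAut.apply_inv_self]

/-- The pullback of `Aut(N) → Out(N)` along an abstract kernel `X : 𝔊 → Out(N)`,
realized as the subgroup of `𝔊 × Aut(N)` of pairs `(g, φ)` with `X g = [φ]`. -/
def Pull {N 𝔊 : Type*} [Group N] [Group 𝔊] (X : 𝔊 →* MulAut N ⧸ Inn N) :
    Subgroup (𝔊 × MulAut N) where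
  carrier := {p | X p.1 = QuotientGroup.mk p.2}
  one_mem' := by simp
  mul_mem' := by
    intro p q hp hq
    simp only [Set.mem_setOf_eq, Prod.fst_mul, Prod.snd_mul, map_mul] at *
    rw [hp, hq]; rfl
  inv_mem' := by
    intro p hp
    simp only [Set.mem_setOf_eq, Prod.fst_inv, Prod.snd_inv, map_inv] at *
    rw [hp]; rfl

/-- The map `N → G` into the pullback, given by the trivial map to `𝔊` together with
the conjugation map `N → Aut(N)`. -/
def toPull {N 𝔊 : Type*} [Group N] [Group 𝔊] (X : 𝔊 →* MulAut N ⧸ Inn N) :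
    N →* Pull X where
  toFun n := ⟨(1, MulAut.conj n), by
    show X 1 = QuotientGroup.mk (MulAut.conj n)
    rw [map_one]
    haveI : ((MulAut.conj : N →* MulAut N).range).Normal := Inn.normal N
    exact ((QuotientGroup.eq_one_iff _).mpr (MonoidHom.mem_range.mpr ⟨n, rfl⟩)).symm⟩
  map_one' := by ext <;> simp
  map_mul' m n := by ext <;> simp

/-- Turing's crossed 2-fold extension associated with an abstract kernel
`X : 𝔊 → Out(N)`: with `G` the pullback of `Aut(N) → Out(N)` along `X` and `Z` the
center of `N`, the sequence `0 → Z → N → G → 𝔊 → 1` is exact, `N → G` with the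
evident `G`-action on `N` is a crossed module, and `Z → N` is a map of `G`-groups. -/
theorem abstract_kernel_crossed_two_fold_extension
    {N 𝔊 : Type*} [Group N] [Group 𝔊] (X : 𝔊 →* MulAut N ⧸ Inn N) :
    (∀ n : N, toPull X n = 1 ↔ n ∈ Subgroup.center N) ∧
    (∀ p : Pull X, ((p : 𝔊 × MulAut N).1 = 1 ↔ ∃ n : N, toPull X n = p)) ∧
    (∀ g : 𝔊, ∃ p : Pull X, (p : 𝔊 × MulAut N).1 = g) ∧
    (∀ (p : Pull X) (n : N),
      toPull X ((p : 𝔊 × MulAut N).2 n) = p * toPull X n * p⁻¹) ∧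
    (∀ m n : N, ((toPull X m : 𝔊 × MulAut N).2) n = m * n * m⁻¹) ∧
    (∀ (p : Pull X), ∀ z ∈ Subgroup.center N,
      (p : 𝔊 × MulAut N).2 z ∈ Subgroup.center N) := by

  refine ⟨?_, ?_, ?_, ?_, ?_, ?_⟩
  · intro n
    constructor
    · intro h
      have h2 : MulAut.conj n = 1 := congrArg (fun p : Pull X => (p : 𝔊 × MulAut N).2) h
      rw [Subgroup.mem_center_iff]
      intro g
      have h3 := congrArg (fun φ : MulAut N => φ g) h2
      simp only [MulAut.conj_apply, MulAut.one_apply] at h3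
      calc g * n = (n * g * n⁻¹) * n := by rw [h3]
        _ = n * g := by group
    · intro hn
      have h2 : MulAut.conj n = 1 := by
        ext g
        simp only [MulAut.conj_apply, MulAut.one_apply]
        rw [Subgroup.mem_center_iff] at hn
        rw [← hn g]; group
      apply Subtype.ext
      apply Prod.ext
      · rfl
      · exact h2
  · intro p
    constructor
    · intro h1
      have hp := p.2
      change X (p : 𝔊 × MulAut N).1 = QuotientGroup.mk (p : 𝔊 × MulAut N).2 at hp
      rw [h1, map_one] at hp
      have : (p : 𝔊 × MulAut N).2 ∈ Inn N := by
        rwa [eq_comm, QuotientGroup.eq_one_iff] at hp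
      obtain ⟨n, hn⟩ := this
      exact ⟨n, Subtype.ext (Prod.ext h1.symm hn)⟩
    · rintro ⟨n, rfl⟩
      rfl
  · intro g
    obtain ⟨φ, hφ⟩ := QuotientGroup.mk_surjective (X g)
    exact ⟨⟨(g, φ), hφ.symm⟩, rfl⟩
  · intro p n
    apply Subtype.ext
    apply Prod.ext
    · show (1 : 𝔊) = (p : 𝔊 × MulAut N).1 * 1 * (p : 𝔊 × MulAut N).1⁻¹
      group
    · show MulAut.conj ((p : 𝔊 × MulAut N).2 n)
        = (p : 𝔊 × MulAut N).2 * MulAut.conj n * (p : 𝔊 × MulAut N).2⁻¹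
      ext m
      simp only [MulAut.mul_apply, MulAut.conj_apply, map_mul, map_inv,
        MulAut.apply_inv_self]
  · intro m n
    rfl
  · intro p z hz
    rw [Subgroup.mem_center_iff] at hz ⊢
    intro g
    have := hz ((p : 𝔊 × MulAut N).2⁻¹ g)
    have h2 := congrArg ((p : 𝔊 × MulAut N).2) this
    simpa [map_mul, MulAut.apply_inv_self] using h2
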